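/- In the setting of the extension construction: let X̄ be a metric space, ∂X ⊆ X̄, and U(Y) = ∪_{x∈Y} B(x, ε(x)/2) with ε : ∂X → (0,1] as above. If V, V' ⊆ ∂X are disjoint (and each point of V ∪ V' satisfies the ε-condition with respect to the two-set family {V, V'}), then U(V) ∩ U(V') = ∅. In particular U(V) = U(V') implies V = V' when additionally U(Y) ∩ ∂X = Y for all Y considered. -/
import Mathlib


/-- If `V, V' ⊆ ∂X` are disjoint and satisfy the `ε`-condition
(`B(x, ε x) ∩ ∂X ⊆ V` for `x ∈ V`, and similarly for `V'`), then the enlargements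
`U(V) = ⋃_{x ∈ V} B(x, ε x / 2)` and `U(V')` are disjoint. In particular, if moreover
`U(Y) ∩ ∂X = Y` for `Y ∈ {V, V'}`, then `U(V) = U(V')` implies `V = V'`. -/
theorem stmt5 {X : Type*} [MetricSpace X] (boundary : Set X) (V V' : Set X)
    (hV : V ⊆ boundary) (hV' : V' ⊆ boundary) (hdisj : Disjoint V V')
    (ε : X → ℝ) (hε0 : ∀ x ∈ boundary, 0 < ε x) (hε1 : ∀ x ∈ boundary, ε x ≤ 1)
    (hcondV : ∀ x ∈ V, Metric.ball x (ε x) ∩ boundary ⊆ V)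
    (hcondV' : ∀ y ∈ V', Metric.ball y (ε y) ∩ boundary ⊆ V') :
    Disjoint (⋃ x ∈ V, Metric.ball x (ε x / 2)) (⋃ y ∈ V', Metric.ball y (ε y / 2)) ∧
    (((⋃ x ∈ V, Metric.ball x (ε x / 2)) ∩ boundary = V) →
      ((⋃ y ∈ V', Metric.ball y (ε y / 2)) ∩ boundary = V') →
      (⋃ x ∈ V, Metric.ball x (ε x / 2)) = (⋃ y ∈ V', Metric.ball y (ε y / 2)) →
      V = V') := by
  have hdis : Disjoint (⋃ x ∈ V, Metric.ball x (ε x / 2)) (⋃ y ∈ V', Metric.ball y (ε y / 2)) := by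
    rw [Set.disjoint_left]
    rintro z hz hz'
    simp only [Set.mem_iUnion] at hz hz'
    obtain ⟨x, hx, hzx⟩ := hz
    obtain ⟨y, hy, hzy⟩ := hz'
    rw [Metric.mem_ball] at hzx hzy
    have hxy : dist x y < max (ε x) (ε y) := by
      calc dist x y ≤ dist z x + dist z y := dist_triangle_left x y z
      _ < ε x / 2 + ε y / 2 := by linarith
      _ ≤ max (ε x) (ε y) / 2 + max (ε x) (ε y) / 2 := by
          gcongr <;> [exact le_max_left _ _; exact le_max_right _ _]
      _ = max (ε x) (ε y) := by ring
    rcases le_total (ε x) (ε y) with h | h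
    · have : x ∈ V' := hcondV' y hy ⟨by rw [Metric.mem_ball]; simpa [max_eq_right h] using hxy, hV hx⟩
      exact Set.disjoint_left.mp hdisj hx this
    · have : y ∈ V := hcondV x hx ⟨by rw [Metric.mem_ball, dist_comm y x]; simpa [max_eq_left h] using hxy, hV' hy⟩
      exact Set.disjoint_left.mp hdisj this hy
  refine ⟨hdis, fun h1 h2 heq => ?_⟩
  rw [← h1, ← h2, heq]
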